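/- Let n = ∏_p p^{v_p} be a positive integer. If v_p ≤ 2 for every prime p dividing n and p does not divide q^{v_q} − 1 for all primes p, q dividing n, then every group of order n is abelian. -/

import Mathlib

open Subgroup MulAction
open scoped commutatorElement

/-- Key step: under Dickson's hypotheses, the normalizer of any Sylow subgroup
equals its centralizer. -/
lemma dickson_normalizer_le_centralizer {G : Type} [Group G] [Finite G] {n p : ℕ}
    (hcard : Nat.card G = n) (hp : p ∈ n.primeFactors)
    (h1 : ∀ p ∈ n.primeFactors, n.factorization p ≤ 2)
    (h2 : ∀ p ∈ n.primeFactors, ∀ q ∈ n.primeFactors,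
      ¬ p ∣ q ^ n.factorization q - 1)
    (P : Sylow p G) :
    Subgroup.normalizer (P : Set G) ≤ Subgroup.centralizer (P : Set G) := by
  haveI hpF : Fact p.Prime := ⟨Nat.prime_of_mem_primeFactors hp⟩
  have hn0 : n ≠ 0 := (Nat.pos_of_mem_primeFactors hp).ne' |> fun h => by
    exact fun hn => absurd hn (by simpa using (Nat.mem_primeFactors.mp hp).2.2)
  set v := n.factorization p with hv
  have hv1 : 1 ≤ v := by
    have := Nat.Prime.factorization_pos_of_dvd hpF.out hn0 (Nat.dvd_of_mem_primeFactors hp)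
    omega
  have hv2 : v ≤ 2 := h1 p hp
  have hPcard : Nat.card (P : Subgroup G) = p ^ v := by
    rw [P.card_eq_multiplicity, hcard]
  have hPcomm : ∀ a b : (P : Subgroup G), a * b = b * a := by
    rcases (by omega : v = 1 ∨ v = 2) with h | h
    · rw [h, pow_one] at hPcard
      haveI := isCyclic_of_prime_card hPcard
      letI : CommGroup (P : Subgroup G) := IsCyclic.commGroup
      exact fun a b => mul_comm a b
    · rw [h] at hPcard
      exact IsPGroup.commutative_of_card_eq_prime_sq hPcard
  haveI hPC : IsMulCommutative (P : Subgroup G) := ⟨⟨hPcomm⟩⟩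
  set N := Subgroup.normalizer (P : Set G) with hN
  set φ := (P : Subgroup G).normalizerMonoidHom with hφ
  -- it suffices that the quotient N / ker φ is trivial
  suffices hQ1 : φ.ker = (⊤ : Subgroup N) by
    intro g hg
    have : (⟨g, hg⟩ : N) ∈ φ.ker := hQ1 ▸ Subgroup.mem_top _
    rw [Subgroup.normalizerMonoidHom_ker] at this
    exact (Subgroup.mem_subgroupOf).mp this
  by_contra hQne
  -- the quotient is a nontrivial finite group; pick a prime q dividing its order
  set Q := N ⧸ φ.ker with hQ
  have hQcard : Nat.card Q ≠ 1 := by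
    intro h
    exact hQne (Subgroup.index_eq_one.mp h)
  set q := (Nat.card Q).minFac with hq
  have hqprime : q.Prime := Nat.minFac_prime hQcard
  haveI : Fact q.Prime := ⟨hqprime⟩
  have hqdvdQ : q ∣ Nat.card Q := Nat.minFac_dvd _
  -- p does not divide the order of Q
  have hNn : Nat.card N ∣ n := hcard ▸ Subgroup.card_subgroup_dvd_card N
  have hkerP : p ^ v ∣ Nat.card φ.ker := by
    have hle : (P : Subgroup G) ≤ N := Subgroup.le_normalizer
    have hsub : ((P : Subgroup G).subgroupOf N) ≤ φ.ker := by
      rw [Subgroup.normalizerMonoidHom_ker]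
      intro x hx
      rw [Subgroup.mem_subgroupOf] at hx ⊢
      exact Subgroup.le_centralizer (P : Subgroup G) hx
    have h1' : Nat.card ((P : Subgroup G).subgroupOf N) = p ^ v := by
      rw [Nat.card_congr (Subgroup.subgroupOfEquivOfLe hle).toEquiv, hPcard]
    calc p ^ v = Nat.card ((P : Subgroup G).subgroupOf N) := h1'.symm
      _ ∣ Nat.card φ.ker := Subgroup.card_dvd_of_le hsub
  have hpQ : ¬ p ∣ Nat.card Q := by
    intro hpdvd
    have hmul : Nat.card N = Nat.card Q * Nat.card φ.ker :=
      Subgroup.card_eq_card_quotient_mul_card_subgroup φ.ker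
    have : p ^ (v + 1) ∣ n := by
      refine dvd_trans ?_ hNn
      rw [hmul, pow_succ, mul_comm (p ^ v) p]
      exact mul_dvd_mul hpdvd hkerP
    have := (Nat.Prime.pow_dvd_iff_le_factorization hpF.out hn0).mp this
    omega
  have hqp : q ≠ p := fun h => hpQ (h ▸ hqdvdQ)
  -- q is a prime factor of n
  have hqn : q ∈ n.primeFactors := by
    refine Nat.mem_primeFactors.mpr ⟨hqprime, ?_, hn0⟩
    have hQN : Nat.card Q ∣ Nat.card N :=
      ⟨Nat.card φ.ker, Subgroup.card_eq_card_quotient_mul_card_subgroup φ.ker⟩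
    exact hqdvdQ.trans (hQN.trans hNn)
  -- get an automorphism of P of order q
  obtain ⟨gQ, hgQ⟩ := exists_prime_orderOf_dvd_card' (G := Q) q hqdvdQ
  set σ : MulAut (P : Subgroup G) :=
    ((QuotientGroup.quotientKerEquivRange φ gQ : φ.range) : MulAut (P : Subgroup G)) with hσ
  have hσord : orderOf σ = q := by
    have he : orderOf ((QuotientGroup.quotientKerEquivRange φ) gQ) = orderOf gQ :=
      orderOf_injective (QuotientGroup.quotientKerEquivRange φ).toMonoidHom
        (QuotientGroup.quotientKerEquivRange φ).injective gQ
    rw [hσ, Subgroup.orderOf_coe]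
    exact he.trans hgQ
  -- fixed points of σ form a subgroup of P
  set F : Subgroup (P : Subgroup G) :=
    { carrier := {x | σ x = x}
      one_mem' := map_one σ
      mul_mem' := fun {a b} ha hb => by simp only [Set.mem_setOf_eq] at *; rw [map_mul, ha, hb]
      inv_mem' := fun {a} ha => by simp only [Set.mem_setOf_eq] at *; rw [map_inv, ha] } with hF
  -- the subgroup generated by σ is a q-group acting on P
  have hzp : Nat.card (Subgroup.zpowers σ) = q ^ 1 := by
    rw [Nat.card_zpowers, hσord, pow_one]
  have hqgrp : IsPGroup q (Subgroup.zpowers σ) := IsPGroup.of_card hzp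
  have hmod : Nat.card (P : Subgroup G) ≡
      Nat.card (fixedPoints (Subgroup.zpowers σ) (P : Subgroup G)) [MOD q] :=
    hqgrp.card_modEq_card_fixedPoints _
  have hfixF : (fixedPoints (Subgroup.zpowers σ) (P : Subgroup G)) = (F : Set (P : Subgroup G)) := by
    ext x
    simp only [mem_fixedPoints, SetLike.mem_coe]
    constructor
    · intro h
      have := h ⟨σ, Subgroup.mem_zpowers σ⟩
      exact this
    · intro h g
      obtain ⟨k, hk⟩ := g.2
      have hst : σ ∈ stabilizer (MulAut (P : Subgroup G)) x := h
      have : (g : MulAut (P : Subgroup G)) ∈ stabilizer (MulAut (P : Subgroup G)) x := by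
        rw [← hk]
        exact Subgroup.zpow_mem _ hst k
      have hx : (g : MulAut (P : Subgroup G)) • x = x := this
      exact hx
  have hcongr : Nat.card (fixedPoints (Subgroup.zpowers σ) (P : Subgroup G)) = Nat.card F := by
    rw [hfixF]
    rfl
  have hmod' : Nat.card (P : Subgroup G) ≡ Nat.card F [MOD q] := hcongr ▸ hmod
  -- |F| = p ^ j for some j ≤ v
  have hFdvd : Nat.card F ∣ p ^ v := hPcard ▸ Subgroup.card_subgroup_dvd_card F
  obtain ⟨j, hjv, hFcard⟩ := (Nat.dvd_prime_pow hpF.out).mp hFdvd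
  -- σ is not the identity, so F ≠ ⊤, so j < v
  have hσne : σ ≠ 1 := by
    intro h
    rw [h, orderOf_one] at hσord
    exact hqprime.one_lt.ne hσord
  have hjlt : j < v := by
    rcases lt_or_eq_of_le hjv with h | h
    · exact h
    · exfalso
      have hFtop : F = ⊤ := by
        apply Subgroup.eq_top_of_card_eq
        rw [hFcard, hPcard, h]
      have hall : ∀ x : (P : Subgroup G), σ x = x := by
        intro x
        have hx : x ∈ F := by rw [hFtop]; trivial
        exact hx
      exact hσne (MulEquiv.ext hall)
  -- q divides p ^ v - p ^ j, hence q divides p ^ (v - j) - 1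
  have hdvd1 : q ∣ p ^ v - p ^ j := by
    rw [hPcard, hFcard] at hmod'
    exact (Nat.modEq_iff_dvd' (Nat.pow_le_pow_right hpF.out.one_lt.le hjv)).mp hmod'.symm
  have hfact : p ^ v - p ^ j = p ^ j * (p ^ (v - j) - 1) := by
    rw [Nat.mul_sub, mul_one, ← pow_add, Nat.add_sub_cancel' (le_of_lt hjlt)]
  have hdvd2 : q ∣ p ^ (v - j) - 1 := by
    rw [hfact] at hdvd1
    rcases hqprime.dvd_mul.mp hdvd1 with h | h
    · exact absurd (hqprime.dvd_of_dvd_pow h) (by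
        intro hqp'
        exact hqp ((Nat.prime_dvd_prime_iff_eq hqprime hpF.out).mp hqp'))
    · exact h
  -- contradiction with the hypothesis h2
  apply h2 q hqn p hp
  rw [← hv]
  interval_cases v
  · interval_cases j
    · simpa using hdvd2
  · interval_cases j
    · simpa using hdvd2
    · -- q ∣ p - 1 and p - 1 ∣ p ^ 2 - 1
      have : p - 1 ∣ p ^ 2 - 1 := by
        have := Nat.sub_dvd_pow_sub_pow p 1 2
        simpa using this
      exact dvd_trans (by simpa using hdvd2) this

/-- (Dickson) Let `n = ∏_p p^{v_p}`.  If `v_p ≤ 2` for every prime `p` dividing `n`, and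
`p ∤ q^{v_q} - 1` for all primes `p, q` dividing `n`, then every group of order `n` is
abelian. -/
theorem forall_group_abelian_of_dickson (n : ℕ) (hn : 0 < n)
    (h1 : ∀ p ∈ n.primeFactors, n.factorization p ≤ 2)
    (h2 : ∀ p ∈ n.primeFactors, ∀ q ∈ n.primeFactors,
      ¬ p ∣ q ^ n.factorization q - 1) :
    ∀ (G : Type) [Group G] [Finite G], Nat.card G = n → ∀ x y : G, x * y = y * x := by
  intro G _ _ hcard x y
  -- it suffices to show the commutator is trivial
  rw [← commutatorElement_eq_one_iff_mul_comm]
  set c := ⁅x, y⁆ with hc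
  -- for each prime p | n, the commutator lies in the kernel of the Burnside transfer map
  have key : ∀ p ∈ n.primeFactors, ¬ p ∣ orderOf c := by
    intro p hp hpc
    haveI hpF : Fact p.Prime := ⟨Nat.prime_of_mem_primeFactors hp⟩
    set P : Sylow p G := default with hP
    have hNC := dickson_normalizer_le_centralizer hcard hp h1 h2 P
    -- the Sylow subgroup is commutative
    have hPcomm : ∀ a b : (P : Subgroup G), a * b = b * a := fun a b =>
      Subtype.ext (hNC (Subgroup.le_normalizer b.2) a a.2)
    -- the commutator lies in the kernel of the transfer map
    have hcker : c ∈ (MonoidHom.ker (MonoidHom.transferSylow P hNC)) := by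
      rw [MonoidHom.mem_ker, hc, commutatorElement_def, map_mul, map_mul, map_mul, map_inv,
        map_inv]
      set a := MonoidHom.transferSylow P hNC x
      set b := MonoidHom.transferSylow P hNC y
      rw [show a * b * a⁻¹ * b⁻¹ = a * b * a⁻¹ * b⁻¹ from rfl]
      rw [mul_inv_eq_one]
      calc a * b * a⁻¹ = b * a * a⁻¹ := by rw [hPcomm a b]
        _ = b := by group
    -- so the order of c divides the order of the kernel, which is coprime to p
    have hdvd : orderOf c ∣ Nat.card (MonoidHom.ker (MonoidHom.transferSylow P hNC)) := by
      rw [← Subgroup.orderOf_mk c hcker]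
      exact orderOf_dvd_natCard _
    exact MonoidHom.not_dvd_card_ker_transferSylow P hNC (hpc.trans hdvd)
  -- the order of c divides n but shares no prime factor with n, so it is 1
  have hord : orderOf c ∣ n := hcard ▸ orderOf_dvd_natCard c
  have hord1 : orderOf c = 1 := by
    by_contra hne
    have hpos : 0 < orderOf c := by
      have : Finite G := inferInstance
      exact orderOf_pos c
    set p := (orderOf c).minFac with hp
    have hpprime : p.Prime := Nat.minFac_prime hne
    have hpn : p ∈ n.primeFactors :=
      Nat.mem_primeFactors.mpr ⟨hpprime, (Nat.minFac_dvd _).trans hord, hn.ne'⟩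
    exact key p hpn (Nat.minFac_dvd _)
  exact orderOf_eq_one_iff.mp hord1
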